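/- Let G be a graph with set of tubes T(G). Define h : T(G) → ℝ by h(t) = −|{s ∈ T(G) : s ⊆ t}|. Then for any pair of exchangeable tubes t, t' of G, one has h(t) + h(t') − h(t ∪ t') − Σ_{s ∈ cc(t ∩ t')} h(s) = |{s ∈ T(G) : s ⊄ t, s ⊄ t', s ⊆ t ∪ t'}| > 0. -/

import Mathlib

set_option linter.unusedSectionVars false

open scoped Classical

variable {V : Type*} [Fintype V] [DecidableEq V]

/-- A tube of `G`: a nonempty vertex subset inducing a connected subgraph. -/
def IsTube (G : SimpleGraph V) (t : Finset V) : Prop :=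
  t.Nonempty ∧ (G.induce (t : Set V)).Connected

/-- The set of all tubes of `G`. -/
noncomputable def tubes (G : SimpleGraph V) : Finset (Finset V) :=
  Finset.univ.powerset.filter (fun t => IsTube G t)

/-- Compatibility of tubes: nested, or disjoint with non-tube union. -/
def Compatible (G : SimpleGraph V) (t t' : Finset V) : Prop :=
  t ⊆ t' ∨ t' ⊆ t ∨ (t ∩ t' = ∅ ∧ ¬ IsTube G (t ∪ t'))

/-- A tubing on `G`: pairwise compatible tubes containing all connected components
(that is, all inclusion-maximal tubes). -/
def IsTubing (G : SimpleGraph V) (T : Finset (Finset V)) : Prop :=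
  (∀ t ∈ T, IsTube G t) ∧
  (∀ t ∈ T, ∀ t' ∈ T, Compatible G t t') ∧
  (∀ K : Finset V, IsTube G K → (∀ t : Finset V, IsTube G t → K ⊆ t → K = t) → K ∈ T)

/-- A maximal tubing on `G`. -/
def IsMaxTubing (G : SimpleGraph V) (T : Finset (Finset V)) : Prop :=
  IsTubing G T ∧ ∀ T', IsTubing G T' → T ⊆ T' → T = T'

/-- Two tubes are exchangeable if two maximal tubings differ exactly by them. -/
def ExchangeableT (G : SimpleGraph V) (t t' : Finset V) : Prop :=
  t ≠ t' ∧ ∃ T T', IsMaxTubing G T ∧ IsMaxTubing G T' ∧ t ∈ T ∧ t' ∈ T' ∧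
    T.erase t = T'.erase t'

/-- `u` is a neighbor of the vertex set `s`: `u ∉ s` and `u` is adjacent to some vertex of `s`. -/
def NbrOf (G : SimpleGraph V) (s : Finset V) (u : V) : Prop :=
  u ∉ s ∧ ∃ x ∈ s, G.Adj u x

/-- Connected components of the induced subgraph on `U`:
inclusion-maximal tubes contained in `U`. -/
noncomputable def gccSet (G : SimpleGraph V) (U : Finset V) : Finset (Finset V) :=
  (tubes G).filter (fun K => K ⊆ U ∧ ∀ C : Finset V, IsTube G C → C ⊆ U → K ⊆ C → K = C)

/-- Characteristic vector of a subset of `V` in `ℝ^V`. -/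
def chi (S : Finset V) : V → ℝ := fun v => if v ∈ S then 1 else 0

/-- `w` is a non-disconnecting vertex of the set `s`. -/
def NonDisc (G : SimpleGraph V) (s : Finset V) (w : V) : Prop :=
  w ∈ s ∧ (s.erase w = ∅ ∨ IsTube G (s.erase w))

/-- The height function `h(t) = -|{s ∈ T(G) : s ⊆ t}|`. -/
noncomputable def hsub (G : SimpleGraph V) (t : Finset V) : ℝ :=
  -(((tubes G).filter (fun s => s ⊆ t)).card : ℝ)

lemma mem_tubes {G : SimpleGraph V} {s : Finset V} : s ∈ tubes G ↔ IsTube G s := by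
  simp [tubes]

lemma tube_union {G : SimpleGraph V} {a b : Finset V} (ha : IsTube G a) (hb : IsTube G b)
    (h : (a ∩ b).Nonempty) : IsTube G (a ∪ b) := by
  refine ⟨Finset.Nonempty.mono Finset.subset_union_left ha.1, ?_⟩
  rw [Finset.coe_union]
  exact SimpleGraph.induce_union_connected ha.2.preconnected hb.2.preconnected
    (by rw [← Finset.coe_inter]; exact Finset.coe_nonempty.mpr h)

lemma compatible_symm {G : SimpleGraph V} {a b : Finset V} (h : Compatible G a b) :
    Compatible G b a := by
  rcases h with h | h | ⟨h1, h2⟩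
  · exact Or.inr (Or.inl h)
  · exact Or.inl h
  · exact Or.inr (Or.inr ⟨by rwa [Finset.inter_comm], by rwa [Finset.union_comm]⟩)

lemma not_compatible_of_exchangeable {G : SimpleGraph V} {t t' : Finset V}
    (ht' : IsTube G t') (hex : ExchangeableT G t t') : ¬ Compatible G t t' := by
  obtain ⟨hne, T, T', hT, hT', htT, ht'T', hE⟩ := hex
  intro hc
  have ht'notT : t' ∉ T := by
    intro h
    have h1 : t' ∈ T.erase t := Finset.mem_erase.mpr ⟨Ne.symm hne, h⟩
    rw [hE] at h1
    exact (Finset.mem_erase.mp h1).1 rfl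
  obtain ⟨h1, h2, h3⟩ := hT.1
  have htub : IsTubing G (insert t' T) := by
    refine ⟨?_, ?_, ?_⟩
    · intro a ha
      rcases Finset.mem_insert.mp ha with rfl | ha
      · exact ht'
      · exact h1 a ha
    · intro a ha b hb
      rcases Finset.mem_insert.mp ha with ha | ha <;> rcases Finset.mem_insert.mp hb with hb | hb
      · rw [ha, hb]; exact Or.inl (subset_refl _)
      · rw [ha]
        by_cases hbt : b = t
        · subst hbt; exact compatible_symm hc
        · have hb' : b ∈ T'.erase t' := hE ▸ Finset.mem_erase.mpr ⟨hbt, hb⟩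
          exact compatible_symm (hT'.1.2.1 b (Finset.mem_of_mem_erase hb') t' ht'T')
      · rw [hb]
        by_cases hat : a = t
        · subst hat; exact hc
        · have ha' : a ∈ T'.erase t' := hE ▸ Finset.mem_erase.mpr ⟨hat, ha⟩
          exact hT'.1.2.1 a (Finset.mem_of_mem_erase ha') t' ht'T'
      · exact h2 a ha b hb
    · intro K hK hKmax
      exact Finset.mem_insert_of_mem (h3 K hK hKmax)
  have heq := hT.2 _ htub (Finset.subset_insert _ _)
  exact ht'notT (heq ▸ Finset.mem_insert_self t' T)

lemma exchange_facts {G : SimpleGraph V} {t t' : Finset V}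
    (ht : IsTube G t) (ht' : IsTube G t') (hex : ExchangeableT G t t') :
    ¬ t ⊆ t' ∧ ¬ t' ⊆ t ∧ IsTube G (t ∪ t') := by
  have hnc := not_compatible_of_exchangeable ht' hex
  unfold Compatible at hnc
  push_neg at hnc
  refine ⟨hnc.1, hnc.2.1, ?_⟩
  by_cases hint : (t ∩ t').Nonempty
  · exact tube_union ht ht' hint
  · exact hnc.2.2 (Finset.not_nonempty_iff_eq_empty.mp hint)

lemma gcc_exists {G : SimpleGraph V} {s U : Finset V} (hs : IsTube G s) (hsU : s ⊆ U) :
    ∃ K ∈ gccSet G U, s ⊆ K := by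
  set P := (tubes G).filter (fun K => s ⊆ K ∧ K ⊆ U) with hP
  have hsP : s ∈ P := by
    simp only [hP, Finset.mem_filter]
    exact ⟨mem_tubes.mpr hs, subset_refl _, hsU⟩
  obtain ⟨K, hKP, hKmax⟩ := Finset.exists_max_image P (fun K => K.card) ⟨s, hsP⟩
  simp only [hP, Finset.mem_filter] at hKP
  obtain ⟨hKt, hsK, hKU⟩ := hKP
  refine ⟨K, ?_, hsK⟩
  simp only [gccSet, Finset.mem_filter]
  refine ⟨hKt, hKU, ?_⟩
  intro C hC hCU hKC
  have hCP : C ∈ P := by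
    simp only [hP, Finset.mem_filter]
    exact ⟨mem_tubes.mpr hC, hsK.trans hKC, hCU⟩
  exact Finset.eq_of_subset_of_card_le hKC (hKmax C hCP)

lemma gcc_unique {G : SimpleGraph V} {s U K K' : Finset V}
    (hK : K ∈ gccSet G U) (hK' : K' ∈ gccSet G U)
    (hs : IsTube G s) (h1 : s ⊆ K) (h2 : s ⊆ K') : K = K' := by
  simp only [gccSet, Finset.mem_filter, mem_tubes] at hK hK'
  have hint : (K ∩ K').Nonempty := hs.1.mono (Finset.subset_inter h1 h2)
  have hu : IsTube G (K ∪ K') := tube_union hK.1 hK'.1 hint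
  have huU : K ∪ K' ⊆ U := Finset.union_subset hK.2.1 hK'.2.1
  have e1 := hK.2.2 _ hu huU Finset.subset_union_left
  have e2 := hK'.2.2 _ hu huU Finset.subset_union_right
  exact e1.trans e2.symm

lemma gcc_sum_card {G : SimpleGraph V} (U : Finset V) :
    ∑ K ∈ gccSet G U, ((tubes G).filter (fun s => s ⊆ K)).card =
      ((tubes G).filter (fun s => s ⊆ U)).card := by
  have hdisj : ∀ K ∈ gccSet G U, ∀ K' ∈ gccSet G U, K ≠ K' →
      Disjoint ((tubes G).filter (fun s => s ⊆ K)) ((tubes G).filter (fun s => s ⊆ K')) := by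
    intro K hK K' hK' hne
    rw [Finset.disjoint_left]
    intro s hs1 hs2
    simp only [Finset.mem_filter, mem_tubes] at hs1 hs2
    exact hne (gcc_unique hK hK' hs1.1 hs1.2 hs2.2)
  rw [← Finset.card_biUnion hdisj]
  congr 1
  ext s
  simp only [Finset.mem_biUnion, Finset.mem_filter, mem_tubes]
  constructor
  · rintro ⟨K, hK, hst, hsK⟩
    have : K ⊆ U := (Finset.mem_filter.mp hK).2.1
    exact ⟨hst, hsK.trans this⟩
  · rintro ⟨hst, hsU⟩
    obtain ⟨K, hK, hsK⟩ := gcc_exists hst hsU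
    exact ⟨K, hK, hst, hsK⟩

theorem stmt14 (G : SimpleGraph V) (t t' : Finset V)
    (ht : IsTube G t) (ht' : IsTube G t') (hex : ExchangeableT G t t') :
    hsub G t + hsub G t' - hsub G (t ∪ t') - ∑ s ∈ gccSet G (t ∩ t'), hsub G s =
      (((tubes G).filter (fun s => ¬ s ⊆ t ∧ ¬ s ⊆ t' ∧ s ⊆ t ∪ t')).card : ℝ) ∧
    0 < ((tubes G).filter (fun s => ¬ s ⊆ t ∧ ¬ s ⊆ t' ∧ s ⊆ t ∪ t')).card := by
  obtain ⟨hntt', hnt't, htube⟩ := exchange_facts ht ht' hex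
  set A := (tubes G).filter (fun s => s ⊆ t) with hA
  set B := (tubes G).filter (fun s => s ⊆ t') with hB
  set C := (tubes G).filter (fun s => s ⊆ t ∩ t') with hC
  set U := (tubes G).filter (fun s => s ⊆ t ∪ t') with hU
  set X := (tubes G).filter (fun s => ¬ s ⊆ t ∧ ¬ s ⊆ t' ∧ s ⊆ t ∪ t') with hX
  -- card identity: U.card + C.card = A.card + B.card + X.card
  have hAB_union : A ∪ B = (tubes G).filter (fun s => s ⊆ t ∨ s ⊆ t') := by
    rw [hA, hB, ← Finset.filter_or]
  have hAB_inter : A ∩ B = C := by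
    rw [hA, hB, hC, ← Finset.filter_and]
    apply Finset.filter_congr
    intro s _
    simp [Finset.subset_inter_iff]
  have hsplit : (A ∪ B).card + X.card = U.card := by
    have := Finset.card_filter_add_card_filter_not
      (s := U) (p := fun s => s ⊆ t ∨ s ⊆ t')
    rw [hU, Finset.filter_filter, Finset.filter_filter] at this
    calc (A ∪ B).card + X.card
        = ((tubes G).filter (fun s => s ⊆ t ∪ t' ∧ (s ⊆ t ∨ s ⊆ t'))).card +
          ((tubes G).filter (fun s => s ⊆ t ∪ t' ∧ ¬(s ⊆ t ∨ s ⊆ t'))).card := by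
          congr 1
          · rw [hAB_union]
            congr 1
            apply Finset.filter_congr
            intro s _
            constructor
            · intro h
              refine ⟨?_, h⟩
              rcases h with h | h
              · exact h.trans Finset.subset_union_left
              · exact h.trans Finset.subset_union_right
            · exact And.right
          · rw [hX]
            congr 1
            apply Finset.filter_congr
            intro s _
            constructor
            · rintro ⟨h1, h2, h3⟩; exact ⟨h3, by tauto⟩
            · rintro ⟨h1, h2⟩; exact ⟨fun h => h2 (Or.inl h), fun h => h2 (Or.inr h), h1⟩
      _ = U.card := this
  have hincl : (A ∪ B).card + C.card = A.card + B.card := by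
    rw [← hAB_inter]; exact Finset.card_union_add_card_inter A B
  have hkey : U.card + C.card = A.card + B.card + X.card := by omega
  have hsum : ∑ s ∈ gccSet G (t ∩ t'), hsub G s = -(C.card : ℝ) := by
    rw [hC]
    rw [← gcc_sum_card (G := G) (t ∩ t')]
    push_cast
    rw [← Finset.sum_neg_distrib]
    rfl
  constructor
  · rw [hsum]
    simp only [hsub, ← hA, ← hB, ← hU]
    have : (U.card : ℝ) + C.card = A.card + B.card + X.card := by exact_mod_cast hkey
    linarith
  · rw [Finset.card_pos]
    refine ⟨t ∪ t', ?_⟩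
    rw [hX, Finset.mem_filter, mem_tubes]
    refine ⟨htube, ?_, ?_, subset_refl _⟩
    · intro h
      exact hnt't (Finset.subset_union_right.trans h)
    · intro h
      exact hntt' (Finset.subset_union_left.trans h)
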